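/- Let F be a totally real number field of degree n ≥ 3 over ℚ. There is no unit ε ∈ F, ε ∉ ℚ, such that n−1 of the real embeddings of ε are equal to each other. More precisely, if ε ∈ F and there exist real numbers α ≠ β such that one real embedding of ε equals β and all the other n−1 real embeddings equal α, then we reach a contradiction (no such ε ∈ F exists). -/

import Mathlib

open Module Polynomial IntermediateField

/-- In a totally real number field of degree n ≥ 3, no element has one real
embedding equal to β and all other n−1 real embeddings equal to α with α ≠ β. -/
theorem stmt5 (F : Type*) [Field F] [NumberField F] (n : ℕ) (hn : 3 ≤ n)
    (hdeg : Module.finrank ℚ F = n)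
    (v : Fin n → (F →+* ℝ)) (hv : Function.Injective v)
    (ε : F) (α β : ℝ) (hab : α ≠ β)
    (i : Fin n) (hβ : v i ε = β) (hα : ∀ j, j ≠ i → v j ε = α) :
    False := by
  classical
  set w : Fin n → (F →+* ℂ) := fun j => Complex.ofRealHom.comp (v j) with hw_def
  have hwinj : Function.Injective w := by
    intro a b h
    apply hv
    ext x
    have := RingHom.congr_fun h x
    simp only [hw_def, RingHom.coe_comp, Function.comp_apply, Complex.ofRealHom_eq_coe,
      Complex.ofReal_inj] at this
    exact this
  have hcard : Fintype.card (F →+* ℂ) = n := by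
    rw [NumberField.Embeddings.card F ℂ, hdeg]
  have hwbij : Function.Bijective w :=
    (Fintype.bijective_iff_injective_and_card w).mpr ⟨hwinj, by simp [hcard]⟩
  have hint : IsIntegral ℚ ε := IsIntegral.of_finite ℚ ε
  -- every complex root of the minimal polynomial is ↑α or ↑β
  have hroots : (minpoly ℚ ε).rootSet ℂ ⊆ {(α : ℂ), (β : ℂ)} := by
    rw [← NumberField.Embeddings.range_eval_eq_rootSet_minpoly F ℂ ε]
    rintro _ ⟨φ, rfl⟩
    obtain ⟨j, rfl⟩ := hwbij.2 φ
    by_cases hj : j = i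
    · subst hj; right; simp [hw_def, hβ]
    · left; simp [hw_def, hα j hj]
  -- hence the minimal polynomial has degree ≤ 2
  have hsep : (minpoly ℚ ε).Separable := Algebra.IsSeparable.isSeparable ℚ ε
  have hsplits : ((minpoly ℚ ε).map (algebraMap ℚ ℂ)).Splits :=
    IsAlgClosed.splits _
  have hdeg2 : (minpoly ℚ ε).natDegree ≤ 2 := by
    rw [← Polynomial.card_rootSet_eq_natDegree hsep hsplits]
    have : ((minpoly ℚ ε).rootSet ℂ).toFinset ⊆ {(α : ℂ), (β : ℂ)} := by
      intro x hx
      have := hroots (Set.mem_toFinset.mp hx)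
      simpa using this
    calc Fintype.card ((minpoly ℚ ε).rootSet ℂ)
        = ((minpoly ℚ ε).rootSet ℂ).toFinset.card := (Set.toFinset_card _).symm
      _ ≤ ({(α : ℂ), (β : ℂ)} : Finset ℂ).card := Finset.card_le_card this
      _ ≤ 2 := Finset.card_insert_le _ _ |>.trans (by simp)
  -- the field K = ℚ(ε)
  set K : IntermediateField ℚ F := ℚ⟮ε⟯ with hK
  have hmem : ε ∈ K := IntermediateField.mem_adjoin_simple_self ℚ ε
  have hfinK : Module.finrank ℚ K ≤ 2 := by
    rw [hK, IntermediateField.adjoin.finrank hint]; exact hdeg2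
  -- every K-algebra hom F → ℂ (via w i on K) is w i as a ring hom
  letI : Algebra K ℂ := ((w i).comp (algebraMap K F)).toAlgebra
  have hcard2 : Fintype.card (F →ₐ[K] ℂ) = Module.finrank K F := AlgHom.card K F ℂ
  have hconst : ∀ ψ : F →ₐ[K] ℂ, ψ.toRingHom = w i := by
    intro ψ
    obtain ⟨j, hj⟩ := hwbij.2 ψ.toRingHom
    have hψε : ψ ε = (β : ℂ) := by
      have : ε = algebraMap K F ⟨ε, hmem⟩ := rfl
      rw [this, ψ.commutes]
      show (w i) ((algebraMap K F) ⟨ε, hmem⟩) = (β : ℂ)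
      simp [hw_def, hβ]
    by_cases hji : j = i
    · rw [← hj, hji]
    · exfalso
      have : w j ε = (β : ℂ) := by rw [hj]; exact hψε
      rw [hw_def] at this
      simp only [RingHom.coe_comp, Function.comp_apply, hα j hji] at this
      rw [Complex.ofRealHom_eq_coe] at this
      exact hab (by exact_mod_cast this)
  have hsub : Fintype.card (F →ₐ[K] ℂ) ≤ 1 := by
    apply Fintype.card_le_one_iff.mpr
    intro ψ₁ ψ₂
    have h1 := hconst ψ₁
    have h2 := hconst ψ₂
    ext x
    have : ψ₁.toRingHom x = ψ₂.toRingHom x := by rw [h1, h2]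
    exact this
  have hKF : Module.finrank K F ≤ 1 := hcard2 ▸ hsub
  have hKF1 : Module.finrank K F = 1 :=
    le_antisymm hKF Module.finrank_pos
  have htower : Module.finrank ℚ K * Module.finrank K F = Module.finrank ℚ F :=
    Module.finrank_mul_finrank ℚ K F
  rw [hKF1, mul_one, hdeg] at htower
  omega
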